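/- (4.8(a), case q > 1: the Frobenius-sesquilinear version.) Let p be a prime, 𝕜 an algebraically closed field of characteristic p, e ≥ 1 an integer and q = p^e. Let V be a 𝕜-vector space of finite dimension n, fix σ ≥ 1 and integers p_1 ≥ ⋯ ≥ p_σ ≥ 1 with (2p_1−1)+⋯+(2p_σ−1) = n. Let B : V × V → 𝕜 be additive in each variable with B(λx, y) = λ·B(x,y) and B(x, λy) = λ^q·B(x,y) for all λ ∈ 𝕜, and nondegenerate (B(x,·) = 0 implies x = 0, and B(·,y) = 0 implies y = 0). Let T : V → V be an additive bijection with T(λx) = λ^{q²}·T(x) for all λ ∈ 𝕜 and B(T x, y) = B(y, x)^q for all x, y. Suppose v_1, …, v_σ ∈ V satisfy: B(v_r, T^k v_t) = 0 for all t < r and −p_t ≤ k ≤ p_t − 2; B(v_r, T^k v_r) = 0 for −p_r + 1 ≤ k ≤ p_r − 2; and B(v_r, T^{p_r−1} v_r) ≠ 0, for every r ∈ {1,…,σ} (T^k for k < 0 meaning iterates of T^{−1}). Then the n vectors T^{h−p_k} v_k, for k ∈ {1,…,σ} and 0 ≤ h ≤ 2p_k − 2, form a 𝕜-basis of V. -/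

import Mathlib

open Module

section Aux

variable {𝕜 V : Type*} [Field 𝕜] [AddCommGroup V]

lemma aux_zpow_apply_add (T : AddAut V) (a b : ℤ) (x : V) :
    ((a + b) • T) x = (a • T) ((b • T) x) := by
  rw [add_zsmul, AddAut.add_apply]

lemma aux_B_zero_right {B : V → V → 𝕜}
    (hBaddr : ∀ x y y', B x (y + y') = B x y + B x y') (x : V) : B x 0 = 0 := by
  have h := hBaddr x 0 0
  rw [add_zero] at h
  exact (left_eq_add.mp h)

lemma aux_B_sum {ι : Type*} {B : V → V → 𝕜}
    (hBaddr : ∀ x y y', B x (y + y') = B x y + B x y') (x : V) (s : Finset ι) (f : ι → V) :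
    B x (∑ i ∈ s, f i) = ∑ i ∈ s, B x (f i) := by
  classical
  induction s using Finset.cons_induction with
  | empty => simpa using aux_B_zero_right hBaddr x
  | cons a s ha ih => rw [Finset.sum_cons, Finset.sum_cons, hBaddr, ih]

lemma aux_step {q : ℕ} (hq : q ≠ 0) {B : V → V → 𝕜} {T : AddAut V}
    (hT : ∀ x y, B (T x) y = (B y x) ^ q) (x y : V) :
    B (T x) (T y) = 0 ↔ B x y = 0 := by
  rw [hT x (T y), hT y x, pow_eq_zero_iff hq, pow_eq_zero_iff hq]

lemma aux_shift {q : ℕ} (hq : q ≠ 0) {B : V → V → 𝕜} {T : AddAut V}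
    (hT : ∀ x y, B (T x) y = (B y x) ^ q) :
    ∀ (a : ℤ) (x y : V), (B ((a • T) x) ((a • T) y) = 0 ↔ B x y = 0) := by
  intro a
  induction a using Int.induction_on with
  | zero => simp
  | succ a ih =>
    intro x y
    have e : ∀ z : V, (((a : ℤ) + 1) • T) z = ((a : ℤ) • T) (T z) := by
      intro z; rw [aux_zpow_apply_add T a 1 z, one_zsmul]
    rw [e x, e y, ih, aux_step hq hT]
  | pred a ih =>
    intro x y
    have e : ∀ z : V, ((-(a : ℤ) - 1) • T) z = ((-(a : ℤ)) • T) ((-T) z) := by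
      intro z; rw [sub_eq_add_neg, aux_zpow_apply_add T (-(a : ℤ)) (-1) z, neg_one_zsmul]
    rw [e x, e y, ih, ← aux_step hq hT ((-T) x) ((-T) y),
      AddAut.apply_neg_self, AddAut.apply_neg_self]

lemma aux_swapZ {q : ℕ} (hq : q ≠ 0) {B : V → V → 𝕜} {T : AddAut V}
    (hT : ∀ x y, B (T x) y = (B y x) ^ q) (x y : V) (m : ℤ) :
    B x ((m • T) y) = 0 ↔ B y (((-m - 1) • T) x) = 0 := by
  have h1 : B x ((m • T) y) = 0 ↔ B (T ((m • T) y)) x = 0 := by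
    rw [hT, pow_eq_zero_iff hq]
  have h2 : T ((m • T) y) = ((m + 1) • T) y := by
    rw [add_comm, aux_zpow_apply_add T 1 m y, one_zsmul]
  have h3 := aux_shift hq hT (-(m + 1)) (((m + 1) • T) y) x
  have h4 : ((-(m + 1) : ℤ) • T) (((m + 1) • T : AddAut V) y) = y := by
    rw [← aux_zpow_apply_add, neg_add_cancel, zero_zsmul, AddAut.zero_apply]
  have h5 : (-(m + 1) : ℤ) = -m - 1 := by ring
  rw [h1, h2, ← h3, h4, h5]

lemma key_helper {s a b x y : ℤ} (hx0 : 0 ≤ x) (hxs : x < s) (hy0 : 0 ≤ y) (hys : y < s)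
    (h : a * s + x < b * s + y) : a < b ∨ (a = b ∧ x < y) := by
  rcases lt_trichotomy a b with h' | h' | h'
  · exact Or.inl h'
  · subst h'; exact Or.inr ⟨rfl, by linarith⟩
  · exfalso
    have hs : (0 : ℤ) ≤ s := le_trans hx0 (le_of_lt hxs)
    have := mul_le_mul_of_nonneg_right (Int.add_one_le_iff.mpr h') hs
    rw [add_mul, one_mul] at this
    linarith

lemma key_helper_eq {s a b x y : ℤ} (hx0 : 0 ≤ x) (hxs : x < s) (hy0 : 0 ≤ y) (hys : y < s)
    (h : a * s + x = b * s + y) : a = b ∧ x = y := by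
  rcases lt_trichotomy a b with h' | h' | h'
  · exfalso
    have hs : (0 : ℤ) ≤ s := le_trans hy0 (le_of_lt hys)
    have := mul_le_mul_of_nonneg_right (Int.add_one_le_iff.mpr h') hs
    rw [add_mul, one_mul] at this
    linarith
  · subst h'; exact ⟨rfl, by linarith⟩
  · exfalso
    have hs : (0 : ℤ) ≤ s := le_trans hx0 (le_of_lt hxs)
    have := mul_le_mul_of_nonneg_right (Int.add_one_le_iff.mpr h') hs
    rw [add_mul, one_mul] at this
    linarith

lemma key_bound {s a x Pz : ℤ} (hs : 0 ≤ s) (ha0 : 0 ≤ a) (ha1 : a + 1 ≤ 2 * Pz)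
    (hx0 : 0 ≤ x) (hxs : x < s) : 0 ≤ a * s + x ∧ a * s + x < 2 * Pz * s := by
  constructor
  · have := mul_nonneg ha0 hs; linarith
  · have := mul_le_mul_of_nonneg_right ha1 hs
    rw [add_mul, one_mul] at this
    linarith

/-- Key (position in the triangular order) of the column `(t, j)`. -/
def SKeyN (P σ pt t j : ℕ) : ℤ :=
  if pt ≤ j + 1 then ((j : ℤ) + 1 - 2 * pt + P) * σ + ((σ : ℤ) - t)
  else (2 * (P : ℤ) - 1 - j) * σ + ((t : ℤ) - 1)

/-- Exponent of `T` for the partner row of the column `(t, j)`. -/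
def SDst (pt j : ℕ) : ℤ :=
  if pt ≤ j + 1 then (j : ℤ) + 1 - 2 * pt else (j : ℤ)

end Aux

/-- 4.8(a), case `q > 1` (Frobenius-sesquilinear version): over an algebraically closed field of
characteristic `p` with `q = p^e`, let `B` be a nondegenerate biadditive form, linear in the
first variable and `q`-semilinear in the second, and `T` an additive bijection, `q²`-semilinear,
with `B(Tx, y) = B(y, x)^q`. If `v₁,…,v_σ` satisfy the 𝒮-conditions, then the `n` vectors
`T^{h−p_k} v_k` (`1 ≤ k ≤ σ`, `0 ≤ h ≤ 2p_k−2`) form a `𝕜`-basis of `V`. -/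
theorem S_conditions_family_is_basis_frobenius
    (prime q e : ℕ) [Fact (Nat.Prime prime)] (he : 1 ≤ e) (hq : q = prime ^ e)
    (𝕜 : Type*) [Field 𝕜] [IsAlgClosed 𝕜] [CharP 𝕜 prime]
    (V : Type*) [AddCommGroup V] [Module 𝕜 V] [FiniteDimensional 𝕜 V]
    (σ n : ℕ) (p : ℕ → ℕ)
    (hσ : 1 ≤ σ)
    (hp1 : ∀ r, 1 ≤ r → r ≤ σ → 1 ≤ p r)
    (hmono : ∀ r, 1 ≤ r → r < σ → p (r + 1) ≤ p r)
    (hn : n = ∑ r ∈ Finset.Icc 1 σ, (2 * p r - 1))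
    (hdimV : finrank 𝕜 V = n)
    (B : V → V → 𝕜)
    (hBaddl : ∀ x x' y, B (x + x') y = B x y + B x' y)
    (hBaddr : ∀ x y y', B x (y + y') = B x y + B x y')
    (hBsmull : ∀ (l : 𝕜) x y, B (l • x) y = l * B x y)
    (hBsmulr : ∀ (l : 𝕜) x y, B x (l • y) = l ^ q * B x y)
    (hBl : ∀ x, (∀ y, B x y = 0) → x = 0)
    (hBr : ∀ y, (∀ x, B x y = 0) → y = 0)
    (T : AddAut V)
    (hTsmul : ∀ (l : 𝕜) (x : V), T (l • x) = (l ^ (q ^ 2)) • T x)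
    (hT : ∀ x y, B (T x) y = (B y x) ^ q)
    (v : ℕ → V)
    (hS1 : ∀ r ∈ Finset.Icc 1 σ, ∀ t ∈ Finset.Icc 1 σ, t < r →
      ∀ m : ℤ, -(p t : ℤ) ≤ m → m ≤ (p t : ℤ) - 2 → B (v r) ((m • T) (v t)) = 0)
    (hS2 : ∀ r ∈ Finset.Icc 1 σ, ∀ m : ℤ, -(p r : ℤ) + 1 ≤ m → m ≤ (p r : ℤ) - 2 →
      B (v r) ((m • T) (v r)) = 0)
    (hS3 : ∀ r ∈ Finset.Icc 1 σ, B (v r) ((((p r : ℤ) - 1) • T) (v r)) ≠ 0) :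
    LinearIndependent 𝕜
      (fun kh : Σ k : Fin σ, Fin (2 * p (k.1 + 1) - 1) =>
        (((kh.2 : ℤ) - (p (kh.1.1 + 1) : ℤ)) • T) (v (kh.1.1 + 1))) ∧
    Submodule.span 𝕜
      (Set.range (fun kh : Σ k : Fin σ, Fin (2 * p (k.1 + 1) - 1) =>
        (((kh.2 : ℤ) - (p (kh.1.1 + 1) : ℤ)) • T) (v (kh.1.1 + 1)))) = ⊤ := by
  classical
  have hq0 : q ≠ 0 := by
    subst hq
    exact pow_ne_zero e (Nat.Prime.ne_zero Fact.out)
  set P := p 1 with hPdef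
  have hA : ∀ t, 1 ≤ t → ∀ u, t ≤ u → u ≤ σ → p u ≤ p t := by
    intro t h1 u h2
    induction u, h2 using Nat.le_induction with
    | base => intro _; exact le_rfl
    | succ u hu ih =>
      intro h3
      exact le_trans (hmono u (by omega) (by omega)) (ih (by omega))
  have hP : ∀ r, 1 ≤ r → r ≤ σ → p r ≤ P := fun r h1 h2 => hA 1 le_rfl r h1 h2
  have hmem : ∀ t : ℕ, 1 ≤ t → t ≤ σ → t ∈ Finset.Icc 1 σ := by
    intro t h1 h2; exact Finset.mem_Icc.mpr ⟨h1, h2⟩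
  have hZ2 : ∀ t u : ℕ, 1 ≤ t → t < u → u ≤ σ → ∀ m : ℤ,
      -(p t : ℤ) + 1 ≤ m → m ≤ (p t : ℤ) - 1 → B (v t) ((m • T) (v u)) = 0 := by
    intro t u h1 h2 h3 m hm1 hm2
    rw [aux_swapZ hq0 hT]
    exact hS1 u (hmem u (by omega) h3) t (hmem t h1 (by omega)) h2 (-m - 1) (by omega) (by omega)
  -- triangularity
  have hTRI : ∀ t u j j' : ℕ, 1 ≤ t → t ≤ σ → 1 ≤ u → u ≤ σ →
      j < 2 * p t - 1 → j' < 2 * p u - 1 →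
      SKeyN P σ (p u) u j' < SKeyN P σ (p t) t j →
      B ((SDst (p t) j • T) (v t)) ((((j' : ℤ) - (p u : ℤ)) • T) (v u)) = 0 := by
    intro t u j j' h1t h2t h1u h2u hj hj' hK
    have hpt1 : 1 ≤ p t := hp1 t h1t h2t
    have hpu1 : 1 ≤ p u := hp1 u h1u h2u
    have hptP : p t ≤ P := hP t h1t h2t
    have hpuP : p u ≤ P := hP u h1u h2u
    have hrw : ((j' : ℤ) - (p u : ℤ)) = SDst (p t) j + (((j' : ℤ) - (p u : ℤ)) - SDst (p t) j) := by
      ring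
    rw [hrw, aux_zpow_apply_add, aux_shift hq0 hT]
    simp only [SDst, SKeyN] at hK ⊢
    by_cases hct : p t ≤ j + 1
    · by_cases hcu : p u ≤ j' + 1
      · -- row small, column small
        simp only [if_pos hct, if_pos hcu] at hK ⊢
        have hd := key_helper (show (0:ℤ) ≤ (σ:ℤ) - u by omega)
          (show (σ:ℤ) - u < (σ:ℤ) by omega) (show (0:ℤ) ≤ (σ:ℤ) - t by omega)
          (show (σ:ℤ) - t < (σ:ℤ) by omega) hK
        rcases lt_trichotomy t u with htu | htu | htu
        · have hpp : p u ≤ p t := hA t h1t u (by omega) h2u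
          rcases hd with hd | ⟨hd1, hd2⟩
          · exact hZ2 t u h1t htu h2u _ (by omega) (by omega)
          · exact hZ2 t u h1t htu h2u _ (by omega) (by omega)
        · subst htu
          rcases hd with hd | ⟨hd1, hd2⟩
          · exact hS2 t (hmem t h1t h2t) _ (by omega) (by omega)
          · exact absurd hd2 (by omega)
        · have hpp : p t ≤ p u := hA u h1u t (by omega) h2t
          rcases hd with hd | ⟨hd1, hd2⟩
          · exact hS1 t (hmem t h1t h2t) u (hmem u h1u h2u) htu _ (by omega) (by omega)
          · exact absurd hd2 (by omega)
      · -- row small, column large : impossible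
        simp only [if_pos hct, if_neg hcu] at hK ⊢
        exfalso
        have hd := key_helper (show (0:ℤ) ≤ (u:ℤ) - 1 by omega)
          (show (u:ℤ) - 1 < (σ:ℤ) by omega) (show (0:ℤ) ≤ (σ:ℤ) - t by omega)
          (show (σ:ℤ) - t < (σ:ℤ) by omega) hK
        rcases hd with hd | ⟨hd1, hd2⟩ <;> omega
    · by_cases hcu : p u ≤ j' + 1
      · -- row large, column small : always zero
        simp only [if_neg hct, if_pos hcu] at hK ⊢
        rcases lt_trichotomy t u with htu | htu | htu
        · have hpp : p u ≤ p t := hA t h1t u (by omega) h2u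
          exact hZ2 t u h1t htu h2u _ (by omega) (by omega)
        · subst htu
          exact hS2 t (hmem t h1t h2t) _ (by omega) (by omega)
        · have hpp : p t ≤ p u := hA u h1u t (by omega) h2t
          exact hS1 t (hmem t h1t h2t) u (hmem u h1u h2u) htu _ (by omega) (by omega)
      · -- row large, column large
        simp only [if_neg hct, if_neg hcu] at hK ⊢
        have hd := key_helper (show (0:ℤ) ≤ (u:ℤ) - 1 by omega)
          (show (u:ℤ) - 1 < (σ:ℤ) by omega) (show (0:ℤ) ≤ (t:ℤ) - 1 by omega)
          (show (t:ℤ) - 1 < (σ:ℤ) by omega) hK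
        rcases lt_trichotomy t u with htu | htu | htu
        · have hpp : p u ≤ p t := hA t h1t u (by omega) h2u
          rcases hd with hd | ⟨hd1, hd2⟩
          · exact hZ2 t u h1t htu h2u _ (by omega) (by omega)
          · exact absurd hd2 (by omega)
        · subst htu
          rcases hd with hd | ⟨hd1, hd2⟩
          · exact hS2 t (hmem t h1t h2t) _ (by omega) (by omega)
          · exact absurd hd2 (by omega)
        · have hpp : p t ≤ p u := hA u h1u t (by omega) h2t
          rcases hd with hd | ⟨hd1, hd2⟩
          · exact hS1 t (hmem t h1t h2t) u (hmem u h1u h2u) htu _ (by omega) (by omega)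
          · exact hS1 t (hmem t h1t h2t) u (hmem u h1u h2u) htu _ (by omega) (by omega)
  -- nonvanishing of the diagonal
  have hDIAG : ∀ t j : ℕ, 1 ≤ t → t ≤ σ → j < 2 * p t - 1 →
      B ((SDst (p t) j • T) (v t)) ((((j : ℤ) - (p t : ℤ)) • T) (v t)) ≠ 0 := by
    intro t j h1 h2 hj hzero
    have hpt1 : 1 ≤ p t := hp1 t h1 h2
    by_cases hct : p t ≤ j + 1
    · have hrw : ((j : ℤ) - (p t : ℤ)) = SDst (p t) j + ((p t : ℤ) - 1) := by
        simp only [SDst, if_pos hct]; ring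
      rw [hrw, aux_zpow_apply_add, aux_shift hq0 hT] at hzero
      exact hS3 t (hmem t h1 h2) hzero
    · have hrw : ((j : ℤ) - (p t : ℤ)) = SDst (p t) j + (-(p t : ℤ)) := by
        simp only [SDst, if_neg hct]; ring
      rw [hrw, aux_zpow_apply_add, aux_shift hq0 hT, aux_swapZ hq0 hT] at hzero
      have he2 : (-(-(p t : ℤ)) - 1) = (p t : ℤ) - 1 := by ring
      rw [he2] at hzero
      exact hS3 t (hmem t h1 h2) hzero
  -- injectivity of the key
  have hKinj : ∀ t u j j' : ℕ, 1 ≤ t → t ≤ σ → 1 ≤ u → u ≤ σ →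
      j < 2 * p t - 1 → j' < 2 * p u - 1 →
      SKeyN P σ (p t) t j = SKeyN P σ (p u) u j' → t = u ∧ j = j' := by
    intro t u j j' h1t h2t h1u h2u hj hj' hK
    have hpt1 : 1 ≤ p t := hp1 t h1t h2t
    have hpu1 : 1 ≤ p u := hp1 u h1u h2u
    have hptP : p t ≤ P := hP t h1t h2t
    have hpuP : p u ≤ P := hP u h1u h2u
    simp only [SKeyN] at hK
    by_cases hct : p t ≤ j + 1 <;> by_cases hcu : p u ≤ j' + 1
    · simp only [if_pos hct, if_pos hcu] at hK
      have hd := key_helper_eq (show (0:ℤ) ≤ (σ:ℤ) - t by omega)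
        (show (σ:ℤ) - t < (σ:ℤ) by omega) (show (0:ℤ) ≤ (σ:ℤ) - u by omega)
        (show (σ:ℤ) - u < (σ:ℤ) by omega) hK
      obtain ⟨hd1, hd2⟩ := hd
      have htu : t = u := by omega
      subst htu
      exact ⟨rfl, by omega⟩
    · simp only [if_pos hct, if_neg hcu] at hK
      have hd := key_helper_eq (show (0:ℤ) ≤ (σ:ℤ) - t by omega)
        (show (σ:ℤ) - t < (σ:ℤ) by omega) (show (0:ℤ) ≤ (u:ℤ) - 1 by omega)
        (show (u:ℤ) - 1 < (σ:ℤ) by omega) hK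
      exact absurd hd.1 (by omega)
    · simp only [if_neg hct, if_pos hcu] at hK
      have hd := key_helper_eq (show (0:ℤ) ≤ (t:ℤ) - 1 by omega)
        (show (t:ℤ) - 1 < (σ:ℤ) by omega) (show (0:ℤ) ≤ (σ:ℤ) - u by omega)
        (show (σ:ℤ) - u < (σ:ℤ) by omega) hK
      exact absurd hd.1 (by omega)
    · simp only [if_neg hct, if_neg hcu] at hK
      have hd := key_helper_eq (show (0:ℤ) ≤ (t:ℤ) - 1 by omega)
        (show (t:ℤ) - 1 < (σ:ℤ) by omega) (show (0:ℤ) ≤ (u:ℤ) - 1 by omega)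
        (show (u:ℤ) - 1 < (σ:ℤ) by omega) hK
      obtain ⟨hd1, hd2⟩ := hd
      exact ⟨by omega, by omega⟩
  -- bounds on the key
  have hKb : ∀ t j : ℕ, 1 ≤ t → t ≤ σ → j < 2 * p t - 1 →
      0 ≤ SKeyN P σ (p t) t j ∧ SKeyN P σ (p t) t j < 2 * (P : ℤ) * σ := by
    intro t j h1 h2 hj
    have hpt1 : 1 ≤ p t := hp1 t h1 h2
    have hptP : p t ≤ P := hP t h1 h2
    simp only [SKeyN]
    by_cases hct : p t ≤ j + 1
    · rw [if_pos hct]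
      exact key_bound (by positivity) (by omega) (by omega) (by omega) (by omega)
    · rw [if_neg hct]
      exact key_bound (by positivity) (by omega) (by omega) (by omega) (by omega)
  -- linear independence
  set F : (Σ k : Fin σ, Fin (2 * p (k.1 + 1) - 1)) → V :=
    fun kh => (((kh.2 : ℤ) - (p (kh.1.1 + 1) : ℤ)) • T) (v (kh.1.1 + 1)) with hF
  have hLI : LinearIndependent 𝕜 F := by
    rw [Fintype.linearIndependent_iff]
    intro g hg
    have main : ∀ (M : ℕ) (c : Σ k : Fin σ, Fin (2 * p (k.1 + 1) - 1)),
        2 * (P : ℤ) * σ - SKeyN P σ (p (c.1.1 + 1)) (c.1.1 + 1) c.2.1 ≤ M → g c = 0 := by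
      intro M
      induction M with
      | zero =>
        intro c hc
        exfalso
        obtain ⟨⟨k, hk⟩, ⟨j, hj⟩⟩ := c
        have := (hKb (k + 1) j (by omega) (by omega) hj).2
        simp only [Nat.cast_zero] at hc
        linarith
      | succ M ih =>
        intro c hc
        obtain ⟨⟨k, hk⟩, ⟨j, hj⟩⟩ := c
        have h0 : B ((SDst (p (k + 1)) j • T) (v (k + 1))) (∑ b, g b • F b) = 0 := by
          rw [hg]; exact aux_B_zero_right hBaddr _
        rw [aux_B_sum hBaddr] at h0
        simp only [hBsmulr] at h0
        rw [Fintype.sum_eq_single (⟨⟨k, hk⟩, ⟨j, hj⟩⟩ : Σ k : Fin σ, Fin (2 * p (k.1 + 1) - 1))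
          ?side] at h0
        · simp only [hF, Fin.val_mk] at h0
          have hD := hDIAG (k + 1) j (by omega) (by omega) hj
          rcases mul_eq_zero.mp h0 with h | h
          · exact (pow_eq_zero_iff hq0).mp h
          · exact absurd h hD
        case side =>
          intro b hbne
          obtain ⟨⟨k', hk'⟩, ⟨j', hj'⟩⟩ := b
          rcases lt_trichotomy (SKeyN P σ (p (k' + 1)) (k' + 1) j')
              (SKeyN P σ (p (k + 1)) (k + 1) j) with hlt | heq | hgt
          · have hz := hTRI (k + 1) (k' + 1) j j' (by omega) (by omega) (by omega) (by omega)
              hj hj' hlt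
            simp only [hF, Fin.val_mk]
            rw [hz, mul_zero]
          · exfalso
            obtain ⟨e1, e2⟩ := hKinj (k + 1) (k' + 1) j j' (by omega) (by omega) (by omega)
              (by omega) hj hj' heq.symm
            apply hbne
            have ek : k' = k := by omega
            subst ek
            have ej : j' = j := by omega
            subst ej
            rfl
          · have hgb : g ⟨⟨k', hk'⟩, ⟨j', hj'⟩⟩ = 0 := by
              apply ih
              have := (hKb (k + 1) j (by omega) (by omega) hj).1
              push_cast at hc ⊢
              linarith
            rw [hgb, zero_pow hq0, zero_mul]
    intro c
    obtain ⟨⟨k, hk⟩, ⟨j, hj⟩⟩ := c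
    apply main (2 * P * σ)
    have := (hKb (k + 1) j (by omega) (by omega) hj).1
    push_cast
    linarith
  have hcard : Fintype.card (Σ k : Fin σ, Fin (2 * p (k.1 + 1) - 1)) = n := by
    rw [Fintype.card_sigma]
    simp only [Fintype.card_fin]
    rw [hn]
    rw [Fin.sum_univ_eq_sum_range (fun k => 2 * p (k + 1) - 1) σ]
    have hIcc : Finset.Icc 1 σ =
        Finset.map ⟨fun i => i + 1, add_left_injective 1⟩ (Finset.range σ) := by
      ext x
      simp only [Finset.mem_map, Finset.mem_range, Finset.mem_Icc, Function.Embedding.coeFn_mk]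
      constructor
      · intro ⟨h1, h2⟩; exact ⟨x - 1, by omega, by omega⟩
      · rintro ⟨a, ha, rfl⟩; omega
    rw [hIcc, Finset.sum_map]
    simp only [Function.Embedding.coeFn_mk]
  exact ⟨hLI, hLI.span_eq_top_of_card_eq_finrank' (hcard.trans hdimV.symm)⟩
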